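/- Let k ≥ 1 and N ≥ 1, and suppose Wg : S_k → ℂ satisfies the Weingarten relation: for all index tuples a, b, c, d ∈ {1,…,N}^k, ∫_{U(N)} U_{a₁b₁}⋯U_{a_k b_k} · conj(U_{c₁d₁})⋯conj(U_{c_k d_k}) dU = Σ_{σ,τ ∈ S_k} ( ∏_{i=1}^{k} δ_{a_{τ(i)}, c_i} δ_{b_{σ(i)}, d_i} ) Wg(τσ⁻¹), where the integral is with respect to the Haar probability measure on U(N). Let A : ({1,…,N}^k) × ({1,…,N}^k) → ℂ be a family of coefficients and define, for an N×N complex matrix H, P(H) = Σ_{p,q ∈ {1,…,N}^k} A(p,q) ∏_{i=1}^{k} H_{p_i q_i}. If H is an N×N complex matrix such that P(UHU†) = P(H) for every U ∈ U(N), then P(H) = Σ_{σ,τ ∈ S_k} Wg(τσ⁻¹) · ( Σ_{p ∈ {1,…,N}^k} A(p, p∘τ) ) · ( Σ_{a ∈ {1,…,N}^k} ∏_{i=1}^{k} H_{a_i, a_{σ(i)}} ), where p∘τ denotes the tuple whose i-th entry is p_{τ(i)}. -/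

import Mathlib

open MeasureTheory
open scoped Matrix

/-- The product σ-algebra on matrices (entrywise). -/
instance matrixMeasurableSpace {m n α : Type*} [MeasurableSpace α] :
    MeasurableSpace (Matrix m n α) :=
  inferInstanceAs (MeasurableSpace (m → n → α))

section helpers

variable {M : Type*} [AddCommMonoid M]

private lemma pull3 {α β γ : Type*} [Fintype α] [Fintype β] [Fintype γ]
    (f : α → β → γ → M) :
    ∑ a : α, ∑ b : β, ∑ c : γ, f a b c = ∑ c : γ, ∑ a : α, ∑ b : β, f a b c := by
  rw [show (∑ a : α, ∑ b : β, ∑ c : γ, f a b c) = ∑ a : α, ∑ c : γ, ∑ b : β, f a b c from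
    Finset.sum_congr rfl fun a _ => Finset.sum_comm]
  exact Finset.sum_comm

private lemma pull4 {α β γ δ : Type*} [Fintype α] [Fintype β] [Fintype γ] [Fintype δ]
    (f : α → β → γ → δ → M) :
    ∑ a : α, ∑ b : β, ∑ c : γ, ∑ d : δ, f a b c d
      = ∑ d : δ, ∑ a : α, ∑ b : β, ∑ c : γ, f a b c d := by
  rw [show (∑ a : α, ∑ b : β, ∑ c : γ, ∑ d : δ, f a b c d)
      = ∑ a : α, ∑ d : δ, ∑ b : β, ∑ c : γ, f a b c d from
    Finset.sum_congr rfl fun a _ => pull3 _]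
  exact Finset.sum_comm

private lemma pull5 {α β γ δ ε : Type*} [Fintype α] [Fintype β] [Fintype γ] [Fintype δ] [Fintype ε]
    (f : α → β → γ → δ → ε → M) :
    ∑ a : α, ∑ b : β, ∑ c : γ, ∑ d : δ, ∑ e : ε, f a b c d e
      = ∑ e : ε, ∑ a : α, ∑ b : β, ∑ c : γ, ∑ d : δ, f a b c d e := by
  rw [show (∑ a : α, ∑ b : β, ∑ c : γ, ∑ d : δ, ∑ e : ε, f a b c d e)
      = ∑ a : α, ∑ e : ε, ∑ b : β, ∑ c : γ, ∑ d : δ, f a b c d e from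
    Finset.sum_congr rfl fun a _ => pull4 _]
  exact Finset.sum_comm

private lemma uentry_measurable {k N : ℕ} (p a : Fin k → Fin N) (i : Fin k) :
    Measurable (fun u : Matrix.unitaryGroup (Fin N) ℂ =>
      (u : Matrix (Fin N) (Fin N) ℂ) (p i) (a i)) := by
  have hm : Measurable (fun u : Matrix.unitaryGroup (Fin N) ℂ =>
      (u : Matrix (Fin N) (Fin N) ℂ)) := measurable_subtype_coe
  exact ((measurable_pi_apply (a i)).comp (measurable_pi_apply (p i))).comp hm

private lemma uprod_integrable {k N : ℕ} (μ : Measure (Matrix.unitaryGroup (Fin N) ℂ))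
    [IsProbabilityMeasure μ] (p a q b : Fin k → Fin N) :
    Integrable (fun u : Matrix.unitaryGroup (Fin N) ℂ =>
      (∏ i, (u : Matrix (Fin N) (Fin N) ℂ) (p i) (a i)) *
        ∏ i, starRingEnd ℂ ((u : Matrix (Fin N) (Fin N) ℂ) (q i) (b i))) μ := by
  have hmeas : Measurable (fun u : Matrix.unitaryGroup (Fin N) ℂ =>
      (∏ i, (u : Matrix (Fin N) (Fin N) ℂ) (p i) (a i)) *
        ∏ i, starRingEnd ℂ ((u : Matrix (Fin N) (Fin N) ℂ) (q i) (b i))) := by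
    exact (Finset.measurable_prod _ fun i _ => uentry_measurable p a i).mul
      (Finset.measurable_prod _ fun i _ =>
        continuous_star.measurable.comp (uentry_measurable q b i))
  refine ⟨hmeas.aestronglyMeasurable, HasFiniteIntegral.of_bounded (C := 1) (ae_of_all μ ?_)⟩
  intro u
  have h1 : ∀ (r c : Fin k → Fin N) (i : Fin k),
      ‖(u : Matrix (Fin N) (Fin N) ℂ) (r i) (c i)‖ ≤ 1 := fun r c i =>
    entry_norm_bound_of_unitary u.2 _ _
  calc ‖(∏ i, (u : Matrix (Fin N) (Fin N) ℂ) (p i) (a i)) *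
        ∏ i, starRingEnd ℂ ((u : Matrix (Fin N) (Fin N) ℂ) (q i) (b i))‖
      = (∏ i, ‖(u : Matrix (Fin N) (Fin N) ℂ) (p i) (a i)‖) *
        ∏ i, ‖(u : Matrix (Fin N) (Fin N) ℂ) (q i) (b i)‖ := by
        simp [norm_prod]
    _ ≤ 1 * 1 := by
        apply mul_le_mul
        · exact Finset.prod_le_one (fun i _ => norm_nonneg _) (fun i _ => h1 p a i)
        · exact Finset.prod_le_one (fun i _ => norm_nonneg _) (fun i _ => h1 q b i)
        · exact Finset.prod_nonneg fun i _ => norm_nonneg _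
        · norm_num
    _ = 1 := by norm_num

private lemma conj_entry_expand {N : ℕ} (U H : Matrix (Fin N) (Fin N) ℂ) (r c : Fin N) :
    (U * H * Uᴴ) r c = ∑ x : Fin N × Fin N, U r x.1 * H x.1 x.2 * starRingEnd ℂ (U c x.2) := by
  rw [Fintype.sum_prod_type]
  rw [Matrix.mul_apply]
  rw [Finset.sum_comm]
  refine Finset.sum_congr rfl fun j _ => ?_
  rw [Matrix.mul_apply, Matrix.conjTranspose_apply, Finset.sum_mul]
  refine Finset.sum_congr rfl fun i _ => ?_
  simp [Matrix.conjTranspose_apply]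

private lemma sum_delta_right {k N : ℕ} (c : Fin k → Fin N) (f : (Fin k → Fin N) → ℂ) :
    (∑ b : Fin k → Fin N, f b * (if ∀ i, c i = b i then (1:ℂ) else 0)) = f c := by
  classical
  rw [Finset.sum_eq_single c]
  · simp
  · intro b _ hb
    have h : ¬ ∀ i, c i = b i := fun h => hb (funext fun i => (h i).symm)
    simp [h]
  · simp

end helpers

theorem unitary_invariant_poly_trace_invariant_expansion (k N : ℕ) (hk : 1 ≤ k) (hN : 1 ≤ N)
    (μ : Measure (Matrix.unitaryGroup (Fin N) ℂ)) [IsProbabilityMeasure μ]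
    (hinv : ∀ g : Matrix.unitaryGroup (Fin N) ℂ, μ.map (fun u => g * u) = μ)
    (Wg : Equiv.Perm (Fin k) → ℂ)
    (hWg : ∀ a b c d : Fin k → Fin N,
      (∫ u : Matrix.unitaryGroup (Fin N) ℂ,
          (∏ i, (u : Matrix (Fin N) (Fin N) ℂ) (a i) (b i)) *
            ∏ i, starRingEnd ℂ ((u : Matrix (Fin N) (Fin N) ℂ) (c i) (d i)) ∂μ) =
        ∑ σ : Equiv.Perm (Fin k), ∑ τ : Equiv.Perm (Fin k),
          (∏ i, (if a (τ i) = c i then (1:ℂ) else 0) *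
              (if b (σ i) = d i then (1:ℂ) else 0)) * Wg (τ * σ⁻¹))
    (A : (Fin k → Fin N) → (Fin k → Fin N) → ℂ)
    (H : Matrix (Fin N) (Fin N) ℂ)
    (hinvP : ∀ U : Matrix.unitaryGroup (Fin N) ℂ,
      (∑ p : Fin k → Fin N, ∑ q : Fin k → Fin N, A p q *
          ∏ i, ((U : Matrix (Fin N) (Fin N) ℂ) * H *
            (U : Matrix (Fin N) (Fin N) ℂ)ᴴ) (p i) (q i)) =
        ∑ p : Fin k → Fin N, ∑ q : Fin k → Fin N, A p q * ∏ i, H (p i) (q i)) :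
    (∑ p : Fin k → Fin N, ∑ q : Fin k → Fin N, A p q * ∏ i, H (p i) (q i)) =
      ∑ σ : Equiv.Perm (Fin k), ∑ τ : Equiv.Perm (Fin k),
        Wg (τ * σ⁻¹) * (∑ p : Fin k → Fin N, A p (fun i => p (τ i))) *
          (∑ a : Fin k → Fin N, ∏ i, H (a i) (a (σ i))) := by
  classical
  -- the expansion of the entries of U H U†
  have hexp : ∀ (u : Matrix.unitaryGroup (Fin N) ℂ) (p q : Fin k → Fin N),
      (∏ i, ((u : Matrix (Fin N) (Fin N) ℂ) * H *
          (u : Matrix (Fin N) (Fin N) ℂ)ᴴ) (p i) (q i))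
      = ∑ a : Fin k → Fin N, ∑ b : Fin k → Fin N,
          (∏ i, H (a i) (b i)) *
            ((∏ i, (u : Matrix (Fin N) (Fin N) ℂ) (p i) (a i)) *
              ∏ i, starRingEnd ℂ ((u : Matrix (Fin N) (Fin N) ℂ) (q i) (b i))) := by
    intro u p q
    simp only [conj_entry_expand]
    rw [Fintype.prod_sum]
    rw [← Equiv.sum_comp (Equiv.arrowProdEquivProdArrow (Fin k) (fun _ => Fin N) (fun _ => Fin N)).symm]
    rw [Fintype.sum_prod_type]
    refine Finset.sum_congr rfl fun a _ => Finset.sum_congr rfl fun b _ => ?_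
    simp only [Equiv.arrowProdEquivProdArrow, Equiv.coe_fn_symm_mk]
    rw [Finset.prod_mul_distrib, Finset.prod_mul_distrib]
    ring
  -- the integrand is constant, equal to P(H)
  have hconst : ∀ u : Matrix.unitaryGroup (Fin N) ℂ,
      (∑ p : Fin k → Fin N, ∑ q : Fin k → Fin N, ∑ a : Fin k → Fin N, ∑ b : Fin k → Fin N,
          (A p q * ∏ i, H (a i) (b i)) *
            ((∏ i, (u : Matrix (Fin N) (Fin N) ℂ) (p i) (a i)) *
              ∏ i, starRingEnd ℂ ((u : Matrix (Fin N) (Fin N) ℂ) (q i) (b i))))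
      = ∑ p : Fin k → Fin N, ∑ q : Fin k → Fin N, A p q * ∏ i, H (p i) (q i) := by
    intro u
    rw [← hinvP u]
    refine (Finset.sum_congr rfl fun p _ => Finset.sum_congr rfl fun q _ => ?_).symm
    rw [hexp u p q, Finset.mul_sum]
    refine Finset.sum_congr rfl fun a _ => ?_
    rw [Finset.mul_sum]
    refine Finset.sum_congr rfl fun b _ => ?_
    ring
  -- P(H) equals the integral of the expanded sum
  have h0 : (∑ p : Fin k → Fin N, ∑ q : Fin k → Fin N, A p q * ∏ i, H (p i) (q i))
      = ∫ u : Matrix.unitaryGroup (Fin N) ℂ,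
          (∑ p : Fin k → Fin N, ∑ q : Fin k → Fin N, ∑ a : Fin k → Fin N, ∑ b : Fin k → Fin N,
            (A p q * ∏ i, H (a i) (b i)) *
              ((∏ i, (u : Matrix (Fin N) (Fin N) ℂ) (p i) (a i)) *
                ∏ i, starRingEnd ℂ ((u : Matrix (Fin N) (Fin N) ℂ) (q i) (b i)))) ∂μ := by
    rw [integral_congr_ae (ae_of_all μ hconst)]
    simp
  rw [h0]
  -- exchange the integral with the finite sums, and apply the Weingarten formula
  rw [integral_finset_sum _ fun p _ => integrable_finset_sum _ fun q _ =>
    integrable_finset_sum _ fun a _ => integrable_finset_sum _ fun b _ =>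
      (uprod_integrable μ p a q b).const_mul _]
  have hmid : (∑ p : Fin k → Fin N, ∫ u : Matrix.unitaryGroup (Fin N) ℂ,
        (∑ q : Fin k → Fin N, ∑ a : Fin k → Fin N, ∑ b : Fin k → Fin N,
          (A p q * ∏ i, H (a i) (b i)) *
            ((∏ i, (u : Matrix (Fin N) (Fin N) ℂ) (p i) (a i)) *
              ∏ i, starRingEnd ℂ ((u : Matrix (Fin N) (Fin N) ℂ) (q i) (b i)))) ∂μ)
      = ∑ p : Fin k → Fin N, ∑ q : Fin k → Fin N, ∑ a : Fin k → Fin N, ∑ b : Fin k → Fin N,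
          (A p q * ∏ i, H (a i) (b i)) *
            (∑ σ : Equiv.Perm (Fin k), ∑ τ : Equiv.Perm (Fin k),
              (∏ i, (if p (τ i) = q i then (1:ℂ) else 0) *
                (if a (σ i) = b i then (1:ℂ) else 0)) * Wg (τ * σ⁻¹)) := by
    refine Finset.sum_congr rfl fun p _ => ?_
    rw [integral_finset_sum _ fun q _ => integrable_finset_sum _ fun a _ =>
      integrable_finset_sum _ fun b _ => (uprod_integrable μ p a q b).const_mul _]
    refine Finset.sum_congr rfl fun q _ => ?_
    rw [integral_finset_sum _ fun a _ => integrable_finset_sum _ fun b _ =>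
      (uprod_integrable μ p a q b).const_mul _]
    refine Finset.sum_congr rfl fun a _ => ?_
    rw [integral_finset_sum _ fun b _ => (uprod_integrable μ p a q b).const_mul _]
    refine Finset.sum_congr rfl fun b _ => ?_
    rw [integral_const_mul, hWg p a q b]
  rw [hmid]
  -- push the constants inside the permutation sums and pull the permutation sums out
  conv_lhs => simp only [Finset.mul_sum]
  rw [pull5 fun (p q a b : Fin k → Fin N) (σ : Equiv.Perm (Fin k)) =>
    ∑ τ : Equiv.Perm (Fin k),
      (A p q * ∏ i, H (a i) (b i)) *
        ((∏ i, (if p (τ i) = q i then (1:ℂ) else 0) *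
          (if a (σ i) = b i then (1:ℂ) else 0)) * Wg (τ * σ⁻¹))]
  refine Finset.sum_congr rfl fun σ _ => ?_
  rw [pull5 fun (p q a b : Fin k → Fin N) (τ : Equiv.Perm (Fin k)) =>
    (A p q * ∏ i, H (a i) (b i)) *
      ((∏ i, (if p (τ i) = q i then (1:ℂ) else 0) *
        (if a (σ i) = b i then (1:ℂ) else 0)) * Wg (τ * σ⁻¹))]
  refine Finset.sum_congr rfl fun τ _ => ?_
  -- now collapse the Kronecker deltas
  have step1 : ∀ p q : Fin k → Fin N,
      (∑ a : Fin k → Fin N, ∑ b : Fin k → Fin N,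
        (A p q * ∏ i, H (a i) (b i)) *
          ((∏ i, (if p (τ i) = q i then (1:ℂ) else 0) *
            (if a (σ i) = b i then (1:ℂ) else 0)) * Wg (τ * σ⁻¹)))
      = ((if ∀ i, p (τ i) = q i then (1:ℂ) else 0) * Wg (τ * σ⁻¹) * A p q *
          ∑ a : Fin k → Fin N, ∏ i, H (a i) (a (σ i))) := by
    intro p q
    rw [Finset.mul_sum]
    refine Finset.sum_congr rfl fun a _ => ?_
    have hb : ∀ b : Fin k → Fin N,
        (A p q * ∏ i, H (a i) (b i)) *
          ((∏ i, (if p (τ i) = q i then (1:ℂ) else 0) *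
            (if a (σ i) = b i then (1:ℂ) else 0)) * Wg (τ * σ⁻¹))
        = ((if ∀ i, p (τ i) = q i then (1:ℂ) else 0) * Wg (τ * σ⁻¹) * A p q *
            ∏ i, H (a i) (b i)) * (if ∀ i, a (σ i) = b i then (1:ℂ) else 0) := by
      intro b
      rw [Finset.prod_mul_distrib, Fintype.prod_boole, Fintype.prod_boole]
      ring
    rw [Finset.sum_congr rfl fun b _ => hb b]
    exact sum_delta_right (fun i => a (σ i))
      (fun b => (if ∀ i, p (τ i) = q i then (1:ℂ) else 0) * Wg (τ * σ⁻¹) * A p q *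
        ∏ i, H (a i) (b i))
  calc (∑ p : Fin k → Fin N, ∑ q : Fin k → Fin N, ∑ a : Fin k → Fin N, ∑ b : Fin k → Fin N,
        (A p q * ∏ i, H (a i) (b i)) *
          ((∏ i, (if p (τ i) = q i then (1:ℂ) else 0) *
            (if a (σ i) = b i then (1:ℂ) else 0)) * Wg (τ * σ⁻¹)))
      = ∑ p : Fin k → Fin N, ∑ q : Fin k → Fin N,
          (Wg (τ * σ⁻¹) * A p q * ∑ a : Fin k → Fin N, ∏ i, H (a i) (a (σ i))) *
            (if ∀ i, p (τ i) = q i then (1:ℂ) else 0) := by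
        refine Finset.sum_congr rfl fun p _ => Finset.sum_congr rfl fun q _ => ?_
        rw [step1 p q]; ring
    _ = ∑ p : Fin k → Fin N,
          (Wg (τ * σ⁻¹) * A p (fun i => p (τ i)) *
            ∑ a : Fin k → Fin N, ∏ i, H (a i) (a (σ i))) := by
        refine Finset.sum_congr rfl fun p _ => ?_
        exact sum_delta_right (fun i => p (τ i))
          (fun q => Wg (τ * σ⁻¹) * A p q * ∑ a : Fin k → Fin N, ∏ i, H (a i) (a (σ i)))
    _ = Wg (τ * σ⁻¹) * (∑ p : Fin k → Fin N, A p (fun i => p (τ i))) *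
          (∑ a : Fin k → Fin N, ∏ i, H (a i) (a (σ i))) := by
        simp only [Finset.sum_mul, Finset.mul_sum]
        rw [Finset.sum_comm]
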